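/- Let q be a complex number with q ≠ 0 and q⁴ ≠ 1. Then every invertible 3×3 complex matrix M with tr(Mᵀ · M⁻¹) = q² + 1 + q⁻² is congruent to the matrix [[1,0,0],[0,0,1],[0,q²,0]]. -/

import Mathlib

open Matrix

/-- Matrix congruence: `A ≡_c B` iff `A = Pᵀ * B * P` for some invertible `P`. -/
def MatCongruent {n : ℕ} (A B : Matrix (Fin n) (Fin n) ℂ) : Prop :=
  ∃ P : Matrix (Fin n) (Fin n) ℂ, IsUnit P ∧ A = Pᵀ * B * P

private lemma aux_det_sub_smul_one (A : Matrix (Fin 3) (Fin 3) ℂ) (μ : ℂ) :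
    (A - μ • 1).det = A.det - μ * A.adjugate.trace + μ ^ 2 * A.trace - μ ^ 3 := by
  simp [Matrix.det_fin_three, Matrix.adjugate_fin_three, Matrix.trace_fin_three,
    Matrix.sub_apply, Matrix.smul_apply, Matrix.one_apply]
  ring

private lemma aux_unit (C : Matrix (Fin 3) (Fin 3) ℂ) (μ : Fin 3 → ℂ) (hμ : Function.Injective μ)
    (v : Fin 3 → Fin 3 → ℂ) (hv : ∀ i, C.mulVec (v i) = μ i • v i) (hv0 : ∀ i, v i ≠ 0) :
    IsUnit (Matrix.of fun i j => v j i) := by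
  rw [← Matrix.linearIndependent_cols_iff_isUnit]
  have h : (Matrix.of fun i j => v j i).col = v := by funext i; rfl
  rw [h]
  exact Module.End.eigenvectors_linearIndependent' C.mulVecLin μ hμ v
    (fun i => ⟨Module.End.mem_eigenspace_iff.2 (by simpa using hv i), hv0 i⟩)

private lemma aux_unit3 (C : Matrix (Fin 3) (Fin 3) ℂ) (α β γ : ℂ)
    (hαβ : α ≠ β) (hαγ : α ≠ γ) (hβγ : β ≠ γ)
    (x y z : Fin 3 → ℂ) (hx0 : x ≠ 0) (hy0 : y ≠ 0) (hz0 : z ≠ 0)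
    (hx : C.mulVec x = α • x) (hy : C.mulVec y = β • y) (hz : C.mulVec z = γ • z) :
    IsUnit (Matrix.of fun i j => ![x, y, z] j i) := by
  apply aux_unit C ![α, β, γ]
  · intro i j hij
    fin_cases i <;> fin_cases j <;> simp_all
  · intro i; fin_cases i
    · simpa using hx
    · simpa using hy
    · simpa using hz
  · intro i; fin_cases i
    · simpa using hx0
    · simpa using hy0
    · simpa using hz0

/-- For `q ≠ 0` with `q⁴ ≠ 1`, every invertible `3×3` complex matrix `M` with
`tr(Mᵀ * M⁻¹) = q² + 1 + q⁻²` is congruent to `[[1,0,0],[0,0,1],[0,q²,0]]`. -/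
theorem so3_solution_congruent_standard (q : ℂ) (hq0 : q ≠ 0) (hq4 : q ^ 4 ≠ 1)
    (M : Matrix (Fin 3) (Fin 3) ℂ) (hM : IsUnit M)
    (htr : (Mᵀ * M⁻¹).trace = q ^ 2 + 1 + (q⁻¹) ^ 2) :
    MatCongruent M !![1, 0, 0; 0, 0, 1; 0, q ^ 2, 0] := by
  have hd : IsUnit M.det := (Matrix.isUnit_iff_isUnit_det M).mp hM
  have hMdet : M.det ≠ 0 := hd.ne_zero
  have hMM : M * M⁻¹ = 1 := Matrix.mul_nonsing_inv M hd
  set t : ℂ := q ^ 2 + 1 + (q⁻¹) ^ 2 with ht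
  set C : Matrix (Fin 3) (Fin 3) ℂ := M⁻¹ * Mᵀ with hC
  have hMC : M * C = Mᵀ := by rw [hC, ← mul_assoc, hMM, one_mul]
  have hdetC : C.det = 1 := by
    rw [hC, Matrix.det_mul, Matrix.det_nonsing_inv, Matrix.det_transpose]
    field_simp
    exact Ring.inverse_mul_cancel _ hd
  have htC : C.trace = t := by rw [hC, Matrix.trace_mul_comm]; exact htr
  have hCinv : C⁻¹ = (Mᵀ)⁻¹ * M := by
    rw [hC, Matrix.mul_inv_rev, Matrix.nonsing_inv_nonsing_inv M hd]
  have hadjC : C.adjugate = C⁻¹ := by rw [Matrix.inv_def, hdetC]; simp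
  have htCinv : C⁻¹.trace = t := by
    rw [hCinv, ← Matrix.trace_transpose, Matrix.transpose_mul,
      ← Matrix.transpose_nonsing_inv, Matrix.transpose_transpose]
    exact htr
  have heig : ∀ μ : ℂ, (1 - μ * t + μ ^ 2 * t - μ ^ 3 = 0) →
      ∃ w : Fin 3 → ℂ, w ≠ 0 ∧ C.mulVec w = μ • w := by
    intro μ h0
    have hdet0 : (C - μ • 1).det = 0 := by
      rw [aux_det_sub_smul_one, hdetC, hadjC, htCinv, htC]; linear_combination h0
    obtain ⟨w, hw0, hw⟩ := (Matrix.exists_mulVec_eq_zero_iff).mpr hdet0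
    refine ⟨w, hw0, ?_⟩
    rwa [Matrix.sub_mulVec, Matrix.smul_mulVec, Matrix.one_mulVec, sub_eq_zero] at hw
  -- the three eigenvalues 1, q², q⁻²
  set r : ℂ := q ^ 2 with hr
  have hr0 : r ≠ 0 := pow_ne_zero 2 hq0
  have hr1 : r ≠ 1 := by
    intro h; apply hq4; rw [show q ^ 4 = r ^ 2 by rw [hr]; ring, h]; norm_num
  have hrinv1 : r⁻¹ ≠ 1 := by
    intro h; exact hr1 (by rw [← inv_inv r, h, inv_one])
  have hrr : r ≠ r⁻¹ := by
    intro h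
    apply hq4
    have h2 : r * r = 1 := by rw [← mul_inv_cancel₀ hr0]; rw [← h]
    calc q ^ 4 = r * r := by rw [hr]; ring
    _ = 1 := h2
  have h1r : (1 : ℂ) ≠ r := fun h => hr1 h.symm
  have h1rinv : (1 : ℂ) ≠ r⁻¹ := fun h => hrinv1 h.symm
  have htq : t = 1 + r + r⁻¹ := by rw [ht, hr]; field_simp; ring
  obtain ⟨e, he0, he⟩ := heig 1 (by ring)
  obtain ⟨u, hu0, hu⟩ := heig r (by rw [htq]; field_simp; ring)
  obtain ⟨v, hv0, hv⟩ := heig r⁻¹ (by rw [htq]; field_simp; ring)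
  -- the bilinear form x ⬝ᵥ M y
  have hsym : ∀ x y : Fin 3 → ℂ, x ⬝ᵥ M.mulVec (C.mulVec y) = y ⬝ᵥ M.mulVec x := by
    intro x y
    rw [Matrix.mulVec_mulVec, hMC, Matrix.mulVec_transpose, dotProduct_comm,
      ← Matrix.dotProduct_mulVec]
  have key : ∀ (x y : Fin 3 → ℂ) (α β : ℂ), C.mulVec x = α • x → C.mulVec y = β • y →
      β * (x ⬝ᵥ M.mulVec y) = y ⬝ᵥ M.mulVec x := by
    intro x y α β _ hy
    have h := hsym x y
    rw [hy, Matrix.mulVec_smul, dotProduct_smul, smul_eq_mul] at h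
    exact h
  have cancel : ∀ (x γ : ℂ), γ ≠ 1 → γ * x = x → x = 0 := by
    intro x γ hγ h
    have h3 : (γ - 1) * x = 0 := by linear_combination h
    rcases mul_eq_zero.mp h3 with h4 | h4
    · exact absurd (by linear_combination h4) hγ
    · exact h4
  have heu : e ⬝ᵥ M.mulVec u = 0 := by
    refine cancel _ r hr1 ?_
    rw [key e u 1 r he hu, ← one_mul (u ⬝ᵥ M.mulVec e), key u e r 1 hu he]
  have hue : u ⬝ᵥ M.mulVec e = 0 := by
    rw [← one_mul (u ⬝ᵥ M.mulVec e), key u e r 1 hu he, heu]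
  have hev : e ⬝ᵥ M.mulVec v = 0 := by
    refine cancel _ r⁻¹ hrinv1 ?_
    rw [key e v 1 r⁻¹ he hv, ← one_mul (v ⬝ᵥ M.mulVec e), key v e r⁻¹ 1 hv he]
  have hve : v ⬝ᵥ M.mulVec e = 0 := by
    rw [← one_mul (v ⬝ᵥ M.mulVec e), key v e r⁻¹ 1 hv he, hev]
  have huu : u ⬝ᵥ M.mulVec u = 0 := cancel _ r hr1 (key u u r r hu hu)
  have hvv : v ⬝ᵥ M.mulVec v = 0 := cancel _ r⁻¹ hrinv1 (key v v r⁻¹ r⁻¹ hv hv)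
  have hvu : v ⬝ᵥ M.mulVec u = r⁻¹ * (u ⬝ᵥ M.mulVec v) := (key u v r r⁻¹ hu hv).symm
  -- nondegeneracy
  set P₀ : Matrix (Fin 3) (Fin 3) ℂ := Matrix.of fun i j => ![e, u, v] j i with hP₀def
  have hP₀ : IsUnit P₀ := aux_unit3 C 1 r r⁻¹ h1r h1rinv hrr e u v he0 hu0 hv0 he hu hv
  have hnd : ∀ x : Fin 3 → ℂ, (∀ j : Fin 3, x ⬝ᵥ M.mulVec (![e, u, v] j) = 0) → x = 0 := by
    intro x hx
    have hw : (x ᵥ* M) ᵥ* P₀ = 0 := by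
      funext j
      have h1 : ((x ᵥ* M) ᵥ* P₀) j = x ⬝ᵥ M.mulVec (![e, u, v] j) := by
        rw [Matrix.dotProduct_mulVec]; rfl
      rw [h1, hx j]; rfl
    have hxM : x ᵥ* M = 0 := by
      apply Matrix.vecMul_injective_iff_isUnit.mpr hP₀
      show (x ᵥ* M) ᵥ* P₀ = (0 : Fin 3 → ℂ) ᵥ* P₀
      rw [hw, Matrix.zero_vecMul]
    apply Matrix.vecMul_injective_iff_isUnit.mpr hM
    show x ᵥ* M = (0 : Fin 3 → ℂ) ᵥ* M
    rw [hxM, Matrix.zero_vecMul]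
  have ha0 : e ⬝ᵥ M.mulVec e ≠ 0 := by
    intro h
    apply he0
    apply hnd e
    intro j; fin_cases j
    · simpa using h
    · simpa using heu
    · simpa using hev
  have hb0 : u ⬝ᵥ M.mulVec v ≠ 0 := by
    intro h
    apply hu0
    apply hnd u
    intro j; fin_cases j
    · simpa using hue
    · simpa using huu
    · simpa using h
  -- rescale
  set a := e ⬝ᵥ M.mulVec e with hadef
  set b := u ⬝ᵥ M.mulVec v with hbdef
  obtain ⟨z, hz⟩ := IsAlgClosed.exists_pow_nat_eq a (n := 2) (by norm_num)
  have hz0 : z ≠ 0 := by intro h; apply ha0; rw [← hz, h]; ring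
  set s : ℂ := r / b with hsdef
  have hs0 : s ≠ 0 := div_ne_zero hr0 hb0
  set e' : Fin 3 → ℂ := z⁻¹ • e with he'def
  set v' : Fin 3 → ℂ := s • v with hv'def
  have he' : C.mulVec e' = (1 : ℂ) • e' := by
    rw [he'def, Matrix.mulVec_smul, he]; module
  have hv' : C.mulVec v' = r⁻¹ • v' := by
    rw [hv'def, Matrix.mulVec_smul, hv]; module
  set Q : Matrix (Fin 3) (Fin 3) ℂ := Matrix.of fun i j => ![e', v', u] j i with hQdef
  have hQ : IsUnit Q :=
    aux_unit3 C 1 r⁻¹ r h1rinv h1r (fun h => hrr h.symm) e' v' u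
      (smul_ne_zero (inv_ne_zero hz0) he0) (smul_ne_zero hs0 hv0) hu0 he' hv' hu
  have hentry : ∀ i j, (Qᵀ * M * Q) i j = (![e', v', u] i) ⬝ᵥ M.mulVec (![e', v', u] j) := by
    intro i j
    simp [hQdef, Matrix.mul_apply, Matrix.mulVec, dotProduct, Fin.sum_univ_three]
    ring
  have hbil : ∀ (x y : Fin 3 → ℂ) (c d : ℂ),
      (c • x) ⬝ᵥ M.mulVec (d • y) = c * d * (x ⬝ᵥ M.mulVec y) := by
    intro x y c d
    rw [Matrix.mulVec_smul, dotProduct_smul, smul_dotProduct, smul_eq_mul, smul_eq_mul]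
    ring
  have hz2 : z⁻¹ * z⁻¹ * a = 1 := by
    field_simp
    rw [← hz]
  have h12 : s * (v ⬝ᵥ M.mulVec u) = 1 := by
    rw [hvu, hsdef]; field_simp
  have h21 : s * (u ⬝ᵥ M.mulVec v) = r := by
    rw [← hbdef, hsdef]; field_simp
  have hGram : Qᵀ * M * Q = !![1, 0, 0; 0, 0, 1; 0, r, 0] := by
    ext i j
    rw [hentry]
    fin_cases i <;> fin_cases j <;>
      simp [he'def, hv'def, Matrix.mulVec_smul, smul_dotProduct, dotProduct_smul,
        smul_eq_mul, heu, hue, hev, hve, huu, hvv, hvu, ← hadef, ← hbdef]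
    · field_simp
      linear_combination -hz
    · rw [hsdef]; field_simp
    · rw [hsdef]; field_simp
  -- assemble
  have hQd : IsUnit Q.det := (Matrix.isUnit_iff_isUnit_det Q).mp hQ
  have hQtd : IsUnit (Qᵀ).det := by rwa [Matrix.det_transpose]
  refine ⟨Q⁻¹, Matrix.isUnit_nonsing_inv_iff.mpr hQ, ?_⟩
  rw [Matrix.transpose_nonsing_inv, ← hGram]
  simp only [Matrix.mul_assoc]
  rw [Matrix.mul_nonsing_inv _ hQd, Matrix.mul_one, ← Matrix.mul_assoc,
    Matrix.nonsing_inv_mul _ hQtd, Matrix.one_mul]
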